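/- The only Schur rings over the infinite cyclic group Z = ⟨z⟩ are the discrete Schur ring (every basic set a singleton {z^i}) and the symmetric Schur ring whose basic sets are {z^i, z^{-i}} for i ≥ 0. -/

import Mathlib

noncomputable def simpleQuantity (F : Type*) [Field F] {G : Type*} [Group G]
    (D : Finset G) : MonoidAlgebra F G :=
  ∑ g ∈ D, MonoidAlgebra.single g 1

structure SchurRing (F G : Type*) [Field F] [Group G] where
  parts : Set (Finset G)
  parts_nonempty : ∀ D ∈ parts, D.Nonempty
  cover : ∀ g : G, ∃ D ∈ parts, g ∈ D
  eq_of_mem : ∀ D₁ ∈ parts, ∀ D₂ ∈ parts, ∀ g : G, g ∈ D₁ → g ∈ D₂ → D₁ = D₂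
  one_mem : ({1} : Finset G) ∈ parts
  inv_mem : ∀ D ∈ parts, ∃ D' ∈ parts, ∀ g : G, g ∈ D' ↔ g⁻¹ ∈ D
  mul_mem : ∀ x ∈ Submodule.span F (simpleQuantity F '' parts),
    ∀ y ∈ Submodule.span F (simpleQuantity F '' parts),
    x * y ∈ Submodule.span F (simpleQuantity F '' parts)

noncomputable def SchurRing.span {F G : Type*} [Field F] [Group G] (A : SchurRing F G) :
    Submodule F (MonoidAlgebra F G) :=
  Submodule.span F (simpleQuantity F '' A.parts)

def SchurRing.IsASet {F G : Type*} [Field F] [Group G] (A : SchurRing F G)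
    (S : Set G) : Prop :=
  ∀ D ∈ A.parts, (∃ g ∈ D, g ∈ S) → ↑D ⊆ S

section Hom

open MonoidAlgebra

variable {G : Type*} [CommGroup G] (S : Type*) [CommSemiring S]

/-- Simple quantity over an arbitrary semiring. -/
noncomputable def sQ (R : Type*) [Semiring R] (D : Finset G) : MonoidAlgebra R G :=
  ∑ g ∈ D, MonoidAlgebra.single g 1

/-- Base change `ℕ → S` on monoid algebras. -/
noncomputable def natHom : MonoidAlgebra ℕ G →+* MonoidAlgebra S G :=
  MonoidAlgebra.liftNCRingHom
    ((MonoidAlgebra.singleOneRingHom).comp (Nat.castRingHom S))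
    (MonoidAlgebra.of S G) (fun _ _ => Commute.all _ _)

lemma natHom_single (a : G) (c : ℕ) :
    natHom S (MonoidAlgebra.single a c) = MonoidAlgebra.single a (c : S) := by
  have h1 : natHom S (MonoidAlgebra.single a c)
      = ((MonoidAlgebra.singleOneRingHom).comp (Nat.castRingHom S)) c * (MonoidAlgebra.of S G) a :=
    MonoidAlgebra.liftNC_single _ _ _ _
  rw [h1]
  show MonoidAlgebra.single 1 ((c : S)) * MonoidAlgebra.single a 1 = _
  rw [MonoidAlgebra.single_mul_single, one_mul, mul_one]

lemma natHom_apply (h : MonoidAlgebra ℕ G) (x : G) :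
    (natHom S h).coeff x = ((h.coeff x : ℕ) : S) := by
  classical
  conv_lhs => rw [← MonoidAlgebra.sum_coeff_single h]
  rw [Finsupp.sum, map_sum]
  rw [MonoidAlgebra.coeff_sum, Finset.sum_apply']
  simp only [natHom_single, MonoidAlgebra.single_apply]
  rw [Finset.sum_ite_eq' h.coeff.support x (fun a => ((h.coeff a : ℕ) : S))]
  by_cases hx : x ∈ h.coeff.support
  · simp [hx]
  · simp [hx, Finsupp.notMem_support_iff.mp hx]

lemma natHom_sQ (D : Finset G) : natHom S (sQ ℕ D) = sQ S D := by
  rw [sQ, map_sum]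
  simp only [natHom_single, Nat.cast_one]
  rfl

instance monoidAlgebraCharP (p : ℕ) [NeZero p] : CharP (MonoidAlgebra (ZMod p) G) p :=
  charP_of_injective_ringHom (f := MonoidAlgebra.singleOneRingHom)
    (fun a b h => MonoidAlgebra.single_right_injective h) p

lemma sQ_pow_char (p : ℕ) (hp : p.Prime) (D : Finset G) :
    (sQ (ZMod p) D) ^ p = ∑ d ∈ D, MonoidAlgebra.single (d ^ p) (1 : ZMod p) := by
  haveI : Fact p.Prime := ⟨hp⟩
  rw [sQ, sum_pow_char]
  simp [MonoidAlgebra.single_pow]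

end Hom

section Basic

variable {F : Type*} [Field F] {G : Type*} [Group G]

namespace SchurRing

variable (A : SchurRing F G)

/-- The part containing a given element. -/
noncomputable def partOf (g : G) : Finset G := (A.cover g).choose

lemma partOf_mem (g : G) : A.partOf g ∈ A.parts := (A.cover g).choose_spec.1

lemma mem_partOf (g : G) : g ∈ A.partOf g := (A.cover g).choose_spec.2

lemma part_eq {D : Finset G} (hD : D ∈ A.parts) {g : G} (hg : g ∈ D) :
    D = A.partOf g :=
  A.eq_of_mem D hD _ (A.partOf_mem g) g hg (A.mem_partOf g)

lemma partOf_one : A.partOf (1 : G) = {1} :=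
  (A.part_eq A.one_mem (Finset.mem_singleton_self 1)).symm

lemma partOf_inv [DecidableEq G] (g : G) :
    A.partOf g⁻¹ = (A.partOf g).image (·⁻¹) := by
  obtain ⟨D', hD', hiff⟩ := A.inv_mem _ (A.partOf_mem g)
  have hg : g⁻¹ ∈ D' := by rw [hiff, inv_inv]; exact A.mem_partOf g
  have : D' = A.partOf g⁻¹ := A.part_eq hD' hg
  rw [← this]
  ext x
  rw [hiff]
  constructor
  · intro h; exact Finset.mem_image.mpr ⟨x⁻¹, h, inv_inv x⟩
  · intro h
    obtain ⟨y, hy, rfl⟩ := Finset.mem_image.mp h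
    rwa [inv_inv]

lemma sq_mem_span {D : Finset G} (hD : D ∈ A.parts) : simpleQuantity F D ∈ A.span :=
  Submodule.subset_span ⟨D, hD, rfl⟩

lemma mul_mem_span {x y : MonoidAlgebra F G} (hx : x ∈ A.span) (hy : y ∈ A.span) :
    x * y ∈ A.span :=
  A.mul_mem x hx y hy

end SchurRing

lemma simpleQuantity_apply [DecidableEq G] (D : Finset G) (g : G) :
    (simpleQuantity F D).coeff g = if g ∈ D then 1 else 0 := by
  classical
  rw [simpleQuantity]
  rw [MonoidAlgebra.coeff_sum, Finset.sum_apply']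
  simp only [MonoidAlgebra.single_apply]
  rw [Finset.sum_ite_eq' D g (fun _ => (1 : F))]

/-- Coefficients of span elements are constant on parts. -/
lemma coeff_const_on_parts (A : SchurRing F G) {h : MonoidAlgebra F G} (hh : h ∈ A.span)
    {E : Finset G} (hE : E ∈ A.parts) {g₁ g₂ : G} (h₁ : g₁ ∈ E) (h₂ : g₂ ∈ E) :
    h.coeff g₁ = h.coeff g₂ := by
  classical
  refine Submodule.span_induction (p := fun x _ => x.coeff g₁ = x.coeff g₂) ?_ ?_ ?_ ?_ hh
  · rintro x ⟨D, hD, rfl⟩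
    rw [simpleQuantity_apply, simpleQuantity_apply]
    have : g₁ ∈ D ↔ g₂ ∈ D := by
      constructor
      · intro h1
        have := A.eq_of_mem D hD E hE g₁ h1 h₁
        rw [this]; exact h₂
      · intro h2
        have := A.eq_of_mem D hD E hE g₂ h2 h₂
        rw [this]; exact h₁
    simp only [this]
  · rfl
  · intro x y _ _ hx hy
    show (x + y).coeff g₁ = (x + y).coeff g₂
    rw [MonoidAlgebra.coeff_add, Finsupp.add_apply, Finsupp.add_apply, hx, hy]
  · intro a x _ hx
    show (a • x).coeff g₁ = (a • x).coeff g₂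
    rw [MonoidAlgebra.coeff_smul, Finsupp.smul_apply, Finsupp.smul_apply, hx]

/-- Coefficient of a product of two simple quantities. -/
lemma mul_sq_apply [DecidableEq G] (C D : Finset G) (g : G) :
    (simpleQuantity F C * simpleQuantity F D).coeff g
      = (((C ×ˢ D).filter (fun q => q.1 * q.2 = g)).card : F) := by
  classical
  rw [simpleQuantity, simpleQuantity, Finset.sum_mul_sum]
  simp only [MonoidAlgebra.single_mul_single, one_mul]
  rw [← Finset.sum_product']
  rw [MonoidAlgebra.coeff_sum, Finset.sum_apply']
  simp only [MonoidAlgebra.single_apply]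
  rw [Finset.sum_boole]

end Basic
section Wielandt

variable {F : Type*} [Field F]

lemma simpleQuantity_eq_sQ {G : Type*} [CommGroup G] (D : Finset G) :
    simpleQuantity F D = sQ F D := rfl

lemma one_mem_span {G : Type*} [Group G] (A : SchurRing F G) :
    (1 : MonoidAlgebra F G) ∈ A.span := by
  have h1 : (1 : MonoidAlgebra F G) = simpleQuantity F ({1} : Finset G) := by
    rw [simpleQuantity, Finset.sum_singleton]
    rfl
  rw [h1]
  exact A.sq_mem_span A.one_mem

lemma pow_mem_span {G : Type*} [Group G] (A : SchurRing F G) {x : MonoidAlgebra F G}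
    (hx : x ∈ A.span) : ∀ n : ℕ, x ^ n ∈ A.span := by
  intro n
  induction n with
  | zero => simpa using one_mem_span A
  | succ n ih => rw [pow_succ]; exact A.mul_mem_span ih hx

lemma mpow_inj {p : ℕ} (hp : 0 < p) {a b : Multiplicative ℤ} (h : a ^ p = b ^ p) : a = b := by
  have h2 : (p : ℤ) * a.toAdd = (p : ℤ) * b.toAdd := by
    have h3 := congrArg Multiplicative.toAdd h
    simpa [toAdd_pow, nsmul_eq_mul] using h3
  have hp' : (p : ℤ) ≠ 0 := by exact_mod_cast hp.ne'
  exact Multiplicative.toAdd.injective (mul_left_cancel₀ hp' h2)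

lemma sum_single_pow_apply {p : ℕ} (hp : 0 < p) (D : Finset (Multiplicative ℤ))
    (x : Multiplicative ℤ) :
    (∑ d ∈ D, MonoidAlgebra.single (d ^ p) (1 : ZMod p)).coeff x
      = if x ∈ D.image (· ^ p) then 1 else 0 := by
  classical
  rw [MonoidAlgebra.coeff_sum, Finset.sum_apply']
  simp only [MonoidAlgebra.single_apply]
  rw [← Finset.sum_image (f := fun e => if e = x then (1 : ZMod p) else 0)
    (g := (· ^ p)) (fun a _ b _ hab => mpow_inj hp hab)]
  rw [Finset.sum_ite_eq' (D.image (· ^ p)) x (fun _ => (1 : ZMod p))]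

lemma SchurRing.wielandt [CharZero F] (A : SchurRing F (Multiplicative ℤ))
    {p : ℕ} (hp : p.Prime) {D : Finset (Multiplicative ℤ)} (hD : D ∈ A.parts)
    {g g' : Multiplicative ℤ} (hg' : g' ∈ A.partOf g) (hg : g ∈ D.image (· ^ p)) :
    g' ∈ D.image (· ^ p) := by
  classical
  haveI : Fact p.Prime := ⟨hp⟩
  set N : Multiplicative ℤ → ℕ := fun x => ((sQ ℕ D) ^ p).coeff x with hN
  have hF : ∀ x, ((simpleQuantity F D) ^ p).coeff x = ((N x : ℕ) : F) := by
    intro x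
    have h4 : (simpleQuantity F D) ^ p = natHom F ((sQ ℕ D) ^ p) := by
      rw [map_pow, natHom_sQ, simpleQuantity_eq_sQ]
    rw [h4, natHom_apply]
  have hNgg' : N g = N g' := by
    have h5 := coeff_const_on_parts A (pow_mem_span A (A.sq_mem_span hD) p)
      (A.partOf_mem g) (A.mem_partOf g) hg'
    rw [hF, hF] at h5
    exact_mod_cast h5
  have hZ : ∀ x, ((N x : ℕ) : ZMod p) = if x ∈ D.image (· ^ p) then 1 else 0 := by
    intro x
    rw [hN]
    rw [← natHom_apply (ZMod p), map_pow, natHom_sQ, sQ_pow_char p hp,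
      sum_single_pow_apply hp.pos]
  by_contra hg'n
  have h6 := hZ g'
  rw [if_neg hg'n, ← hNgg', hZ g, if_pos hg] at h6
  exact one_ne_zero h6

end Wielandt
section Dilation

variable {F : Type*} [Field F] [CharZero F]

/-- Maximal absolute value of (the additive versions of) elements of a finite set. -/
def mu (D : Finset (Multiplicative ℤ)) : ℕ := D.sup (fun d => d.toAdd.natAbs)

lemma natAbs_le_mu {D : Finset (Multiplicative ℤ)} {d : Multiplicative ℤ} (hd : d ∈ D) :
    d.toAdd.natAbs ≤ mu D := Finset.le_sup hd

lemma part_pow_subset (A : SchurRing F (Multiplicative ℤ)) {D : Finset (Multiplicative ℤ)}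
    (hD : D ∈ A.parts) {a : Multiplicative ℤ} (ha : a ∈ D) :
    ∀ k : ℕ, 1 ≤ k → A.partOf (a ^ k) ⊆ D.image (· ^ k) := by
  classical
  intro k
  induction k using Nat.strong_induction_on with
  | _ k ih =>
    intro hk1
    rcases eq_or_lt_of_le hk1 with h1 | h2
    · subst h1
      have him : D.image (· ^ 1) = D := by
        simp [pow_one]
      rw [him]
      intro x hx
      rw [show a ^ 1 = a from pow_one a] at hx
      rw [A.part_eq hD ha]
      exact hx
    · set p := k.minFac with hp
      have hpp : p.Prime := Nat.minFac_prime (by omega)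
      have hpd : p ∣ k := Nat.minFac_dvd k
      have hkm : k / p * p = k := Nat.div_mul_cancel hpd
      set m := k / p with hm
      have hm1 : 1 ≤ m := Nat.div_pos (Nat.minFac_le (by omega)) hpp.pos
      have hmk : m < k := Nat.div_lt_self (by omega) hpp.one_lt
      have IH := ih m hmk hm1
      have hstep : A.partOf ((a ^ m) ^ p) ⊆ (A.partOf (a ^ m)).image (· ^ p) := by
        intro g' hg'
        exact A.wielandt hpp (A.partOf_mem (a ^ m)) hg'
          (Finset.mem_image_of_mem _ (A.mem_partOf (a ^ m)))
      have hak : a ^ k = (a ^ m) ^ p := by rw [← pow_mul, hkm]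
      rw [hak]
      refine (hstep.trans (Finset.image_subset_image IH)).trans ?_
      rw [Finset.image_image]
      intro x hx
      obtain ⟨d, hd, rfl⟩ := Finset.mem_image.mp hx
      refine Finset.mem_image.mpr ⟨d, hd, ?_⟩
      show d ^ k = _
      rw [← hkm, pow_mul]
      rfl

/-- The key integer forcing lemma. -/
lemma int_force {M : ℕ} {K tu tv tb : ℤ} (hK : 2 * (M : ℤ) < K)
    (hu : |tu| ≤ M) (hv : |tv| ≤ M) (hb : |tb| ≤ M)
    (heq : K * tu - (K - 1) * tv = tb) : tu = tv ∧ tv = tb := by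
  have h7 : K * (tu - tv) = tb - tv := by ring_nf; linarith [heq]
  rcases eq_or_ne tu tv with h | h
  · constructor
    · exact h
    · rw [h, sub_self, mul_zero] at h7
      linarith [h7]
  · exfalso
    have h8 : 1 ≤ |tu - tv| := Int.one_le_abs (sub_ne_zero.mpr h)
    have hK0 : 0 ≤ K := by linarith [Int.natCast_nonneg M]
    have h9 : K ≤ |K * (tu - tv)| := by
      rw [abs_mul, abs_of_nonneg hK0]
      calc K = K * 1 := (mul_one K).symm
        _ ≤ K * |tu - tv| := by
          apply mul_le_mul_of_nonneg_left h8 hK0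
    have h10 : |tb - tv| ≤ 2 * (M : ℤ) := by
      calc |tb - tv| ≤ |tb| + |tv| := abs_sub _ _
        _ ≤ 2 * (M : ℤ) := by linarith
    rw [h7] at h9
    linarith

end Dilation
section Main

variable {F : Type*} [Field F] [CharZero F]

lemma abs_le_of_natAbs_le {x : ℤ} {M : ℕ} (h : x.natAbs ≤ M) : |x| ≤ (M : ℤ) := by
  rw [Int.abs_eq_natAbs]; exact_mod_cast h

lemma mu_eq_zero {D : Finset (Multiplicative ℤ)} (h : mu D = 0) {d : Multiplicative ℤ}
    (hd : d ∈ D) : d = 1 := by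
  have h1 : d.toAdd.natAbs = 0 := Nat.eq_zero_of_le_zero (h ▸ natAbs_le_mu hd)
  have h2 : d.toAdd = 0 := Int.natAbs_eq_zero.mp h1
  exact Multiplicative.toAdd.injective h2

/-- The scaled part equality: for `k` large, the part of `a^k` is exactly `D^{(k)}`. -/
lemma part_pow_eq (A : SchurRing F (Multiplicative ℤ)) {D : Finset (Multiplicative ℤ)}
    (hD : D ∈ A.parts) {a : Multiplicative ℤ} (ha : a ∈ D) {k : ℕ}
    (hk : 2 * mu D < k) : A.partOf (a ^ k) = D.image (· ^ k) := by
  classical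
  by_cases hmu : mu D = 0
  · have ha1 := mu_eq_zero hmu ha
    have hD1 : D = {1} := by
      apply Finset.eq_singleton_iff_unique_mem.mpr
      exact ⟨ha1 ▸ ha, fun x hx => mu_eq_zero hmu hx⟩
    subst ha1
    rw [hD1, one_pow, A.partOf_one, Finset.image_singleton, one_pow]
  · have hmu1 : 1 ≤ mu D := Nat.pos_of_ne_zero hmu
    have hk2 : 2 ≤ k := by omega
    set C := A.partOf (a ^ k) with hC
    set Cm := A.partOf (a ^ (k - 1)) with hCm
    set C' := Cm.image (·⁻¹) with hC'
    have hCsub : C ⊆ D.image (· ^ k) := part_pow_subset A hD ha k (by omega)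
    have hCmsub : Cm ⊆ D.image (· ^ (k - 1)) := part_pow_subset A hD ha (k - 1) (by omega)
    have hC'part : C' ∈ A.parts := by
      rw [hC', ← A.partOf_inv]
      exact A.partOf_mem _
    -- forcing lemma
    have key : ∀ b u v : Multiplicative ℤ, b ∈ D → u ∈ D → v ∈ D →
        u ^ k * (v ^ (k - 1))⁻¹ = b → u = b ∧ v = b := by
      intro b u v hb hu hv heq
      have ht : (k : ℤ) * u.toAdd - ((k : ℤ) - 1) * v.toAdd = b.toAdd := by
        have h1 := congrArg Multiplicative.toAdd heq
        simp only [toAdd_mul, toAdd_inv, toAdd_pow, nsmul_eq_mul] at h1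
        push_cast [Nat.cast_sub (by omega : 1 ≤ k)] at h1
        linarith [h1]
      have hforce := int_force (M := mu D)
        (by exact_mod_cast hk)
        (abs_le_of_natAbs_le (natAbs_le_mu hu))
        (abs_le_of_natAbs_le (natAbs_le_mu hv))
        (abs_le_of_natAbs_le (natAbs_le_mu hb)) ht
      have h2 : u = v := Multiplicative.toAdd.injective hforce.1
      have h3 : v = b := Multiplicative.toAdd.injective hforce.2
      exact ⟨h2.trans h3, h3⟩
    -- the product of the two parts
    have hprod := A.mul_mem_span (A.sq_mem_span (A.partOf_mem (a ^ k))) (A.sq_mem_span hC'part)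
    have hfilter_a : ((C ×ˢ C').filter (fun q => q.1 * q.2 = a))
        = {(a ^ k, (a ^ (k - 1))⁻¹)} := by
      ext q
      simp only [Finset.mem_filter, Finset.mem_product, Finset.mem_singleton]
      constructor
      · rintro ⟨⟨hq1, hq2⟩, hq⟩
        obtain ⟨u, hu, hu2⟩ := Finset.mem_image.mp (hCsub hq1)
        obtain ⟨y, hy, hy2⟩ := Finset.mem_image.mp hq2
        obtain ⟨v, hv, hv2⟩ := Finset.mem_image.mp (hCmsub hy)
        have heq : u ^ k * (v ^ (k - 1))⁻¹ = a := by
          rw [← hu2, ← hy2, ← hv2] at hq; exact hq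
        obtain ⟨h4, h5⟩ := key a u v ha hu hv heq
        subst h4; subst h5
        rw [Prod.ext_iff]
        exact ⟨hu2.symm, by rw [← hy2, hv2]⟩
      · rintro rfl
        refine ⟨⟨A.mem_partOf _, ?_⟩, ?_⟩
        · exact Finset.mem_image_of_mem _ (A.mem_partOf _)
        · show a ^ k * (a ^ (k - 1))⁻¹ = a
          have h6 : a ^ k = a ^ (k - 1) * a := by
            rw [← pow_succ]; congr 1; omega
          rw [h6, mul_comm (a ^ (k - 1)) a, mul_inv_cancel_right]
    -- all k-th powers of elements of D are in C
    have hmem : ∀ b ∈ D, b ^ k ∈ C := by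
      intro b hb
      have hcoeff := coeff_const_on_parts A hprod hD hb ha
      rw [mul_sq_apply, mul_sq_apply, hfilter_a, Finset.card_singleton] at hcoeff
      have hcard : ((C ×ˢ C').filter (fun q => q.1 * q.2 = b)).card = 1 := by
        exact_mod_cast hcoeff
      obtain ⟨q, hq⟩ := Finset.card_eq_one.mp hcard
      have hq2 : q ∈ (C ×ˢ C').filter (fun q => q.1 * q.2 = b) := hq ▸ Finset.mem_singleton_self q
      simp only [Finset.mem_filter, Finset.mem_product] at hq2
      obtain ⟨⟨hq3, hq4⟩, hq5⟩ := hq2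
      obtain ⟨u, hu, hu2⟩ := Finset.mem_image.mp (hCsub hq3)
      obtain ⟨y, hy, hy2⟩ := Finset.mem_image.mp hq4
      obtain ⟨v, hv, hv2⟩ := Finset.mem_image.mp (hCmsub hy)
      have heq : u ^ k * (v ^ (k - 1))⁻¹ = b := by
        rw [← hu2, ← hy2, ← hv2] at hq5; exact hq5
      obtain ⟨h4, _⟩ := key b u v hb hu hv heq
      rw [← h4, hu2]
      exact hq3
    apply Finset.Subset.antisymm hCsub
    intro x hx
    obtain ⟨b, hb, rfl⟩ := Finset.mem_image.mp hx
    exact hmem b hb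

end Main
section AbsEq

variable {F : Type*} [Field F] [CharZero F]

lemma nat_mul_max (k m n : ℕ) : k * max m n = max (k * m) (k * n) := by
  rcases le_total m n with h | h
  · rw [max_eq_right h, max_eq_right (Nat.mul_le_mul_left k h)]
  · rw [max_eq_left h, max_eq_left (Nat.mul_le_mul_left k h)]

lemma nat_mul_sup {α : Type*} (s : Finset α) (f : α → ℕ) (k : ℕ) :
    s.sup (fun x => k * f x) = k * s.sup f := by
  classical
  induction s using Finset.induction_on with
  | empty => simp
  | insert _ _ h ih =>
    rw [Finset.sup_insert, Finset.sup_insert, ih, nat_mul_max]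

lemma mu_image_pow (D : Finset (Multiplicative ℤ)) (k : ℕ) :
    mu (D.image (· ^ k)) = k * mu D := by
  classical
  rw [mu, Finset.sup_image]
  have h : ((fun d : Multiplicative ℤ => d.toAdd.natAbs) ∘ (· ^ k))
      = fun d : Multiplicative ℤ => k * d.toAdd.natAbs := by
    funext d
    show (d ^ k).toAdd.natAbs = k * d.toAdd.natAbs
    rw [toAdd_pow, nsmul_eq_mul, Int.natAbs_mul, Int.natAbs_natCast]
  rw [h, nat_mul_sup]
  rfl

lemma mu_image_inv (D : Finset (Multiplicative ℤ)) :
    mu (D.image (·⁻¹)) = mu D := by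
  classical
  rw [mu, Finset.sup_image]
  congr 1
  funext d
  show (d⁻¹).toAdd.natAbs = d.toAdd.natAbs
  rw [toAdd_inv, Int.natAbs_neg]

/-- Any two elements of a part have the same absolute value. -/
lemma natAbs_eq_on_part (A : SchurRing F (Multiplicative ℤ)) {D : Finset (Multiplicative ℤ)}
    (hD : D ∈ A.parts) {a b : Multiplicative ℤ} (ha : a ∈ D) (hb : b ∈ D) :
    a.toAdd.natAbs = b.toAdd.natAbs := by
  classical
  by_cases ha1 : a = 1
  · have hD1 : D = {1} := by
      subst ha1
      exact A.eq_of_mem D hD {1} A.one_mem 1 ha (Finset.mem_singleton_self 1)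
    rw [hD1, Finset.mem_singleton] at hb
    rw [ha1, hb]
  · by_contra hne
    have hb1 : b ≠ 1 := by
      rintro rfl
      have hD1 : D = {1} := A.eq_of_mem D hD {1} A.one_mem 1 hb (Finset.mem_singleton_self 1)
      rw [hD1, Finset.mem_singleton] at ha
      exact ha1 ha
    set na := a.toAdd.natAbs with hna
    set nb := b.toAdd.natAbs with hnb
    have hna1 : 1 ≤ na := by
      rcases Nat.eq_zero_or_pos na with h | h
      · exact absurd (Multiplicative.toAdd.injective (Int.natAbs_eq_zero.mp h)) ha1
      · exact h
    have hnb1 : 1 ≤ nb := by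
      rcases Nat.eq_zero_or_pos nb with h | h
      · exact absurd (Multiplicative.toAdd.injective (Int.natAbs_eq_zero.mp h)) hb1
      · exact h
    have hmug : 1 ≤ mu D := le_trans hna1 (natAbs_le_mu ha)
    set t := 2 * mu D + 1 with ht
    set k₁ := t * nb with hk₁
    set k₂ := t * na with hk₂
    have htle : 2 * mu D < t := by omega
    have hk₁big : 2 * mu D < k₁ :=
      lt_of_lt_of_le htle (Nat.le_mul_of_pos_right t hnb1)
    have hk₂big : 2 * mu D < k₂ :=
      lt_of_lt_of_le htle (Nat.le_mul_of_pos_right t hna1)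
    have h1 := part_pow_eq A hD ha hk₁big
    have h2 := part_pow_eq A hD hb hk₂big
    have habs : (a ^ k₁).toAdd.natAbs = (b ^ k₂).toAdd.natAbs := by
      rw [toAdd_pow, toAdd_pow, nsmul_eq_mul, nsmul_eq_mul, Int.natAbs_mul, Int.natAbs_mul,
        Int.natAbs_natCast, Int.natAbs_natCast, ← hna, ← hnb, hk₁, hk₂]
      ring
    have hk₁₂ : k₁ ≠ k₂ := by
      simp only [hk₁, hk₂]
      intro h
      have h0 : 0 < t := by omega
      exact hne (Nat.eq_of_mul_eq_mul_left h0 h.symm)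
    rcases Int.natAbs_eq_natAbs_iff.mp habs with heq | heq
    · have he : a ^ k₁ = b ^ k₂ := Multiplicative.toAdd.injective heq
      have h3 : D.image (· ^ k₁) = D.image (· ^ k₂) := by
        rw [← h1, ← h2, he]
      have h4 := congrArg mu h3
      rw [mu_image_pow, mu_image_pow] at h4
      exact hk₁₂ (Nat.eq_of_mul_eq_mul_right hmug h4)
    · have he : a ^ k₁ = (b ^ k₂)⁻¹ := by
        apply Multiplicative.toAdd.injective
        rw [toAdd_inv]
        exact heq
      have h3 : D.image (· ^ k₁) = (D.image (· ^ k₂)).image (·⁻¹) := by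
        rw [← h1, ← h2, he, A.partOf_inv]
      have h4 := congrArg mu h3
      rw [mu_image_pow, mu_image_inv, mu_image_pow] at h4
      exact hk₁₂ (Nat.eq_of_mul_eq_mul_right hmug h4)

/-- Every part is a singleton or a symmetric pair. -/
lemma part_eq_pair (A : SchurRing F (Multiplicative ℤ)) {D : Finset (Multiplicative ℤ)}
    (hD : D ∈ A.parts) {g : Multiplicative ℤ} (hg : g ∈ D) :
    D = {g} ∨ D = {g, g⁻¹} := by
  classical
  have hsub : D ⊆ {g, g⁻¹} := by
    intro x hx
    have h := natAbs_eq_on_part A hD hx hg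
    rcases Int.natAbs_eq_natAbs_iff.mp h with h2 | h2
    · have : x = g := Multiplicative.toAdd.injective h2
      simp [this]
    · have : x = g⁻¹ := by
        apply Multiplicative.toAdd.injective
        rw [toAdd_inv]
        exact h2
      simp [this]
  by_cases hinv : g⁻¹ ∈ D
  · right
    apply Finset.Subset.antisymm hsub
    intro x hx
    rcases Finset.mem_insert.mp hx with h | h
    · rwa [h]
    · rw [Finset.mem_singleton] at h
      rwa [h]
  · left
    apply Finset.Subset.antisymm
    · intro x hx
      rcases Finset.mem_insert.mp (hsub hx) with h | h
      · simp [h]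
      · rw [Finset.mem_singleton] at h
        subst h
        exact absurd hx hinv
    · intro x hx
      rw [Finset.mem_singleton] at hx
      rwa [hx]

end AbsEq
section Dichotomy

variable {F : Type*} [Field F] [CharZero F]

lemma toadd_ne {x y : Multiplicative ℤ} (h : x.toAdd ≠ y.toAdd) : x ≠ y :=
  fun e => h (congrArg Multiplicative.toAdd e)

lemma toadd_ne_zero {x : Multiplicative ℤ} (h : x ≠ 1) : x.toAdd ≠ 0 :=
  fun e => h (Multiplicative.toAdd.injective e)

lemma pair_singleton_mul (A : SchurRing F (Multiplicative ℤ)) {x b : Multiplicative ℤ}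
    (hx1 : x ≠ 1) (hb1 : b ≠ 1) (hbx' : b ≠ x⁻¹)
    (hpx : A.partOf x = {x, x⁻¹}) (hpb : A.partOf b = {b}) :
    A.partOf (x * b) = {x * b} := by
  classical
  have hx0 := toadd_ne_zero hx1
  have hb0 := toadd_ne_zero hb1
  have hbx'0 : b.toAdd ≠ -x.toAdd := by
    intro h
    exact hbx' (Multiplicative.toAdd.injective (by rw [toAdd_inv]; exact h))
  rcases part_eq_pair A (A.partOf_mem (x * b)) (A.mem_partOf (x * b)) with h | h
  · exact h
  · exfalso
    -- inequalities
    have e1 : x⁻¹ * b ≠ x * b := by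
      apply toadd_ne
      simp only [toAdd_mul, toAdd_inv]
      omega
    have e2 : x * b ≠ (x * b)⁻¹ := by
      apply toadd_ne
      simp only [toAdd_mul, toAdd_inv]
      omega
    have e3 : x⁻¹ * b ≠ (x * b)⁻¹ := by
      apply toadd_ne
      simp only [toAdd_mul, toAdd_inv]
      omega
    have hprodset : (({x, x⁻¹} : Finset (Multiplicative ℤ)) ×ˢ ({b} : Finset (Multiplicative ℤ)))
        = {(x, b), (x⁻¹, b)} := by
      ext q
      simp only [Finset.mem_product, Finset.mem_insert, Finset.mem_singleton, Prod.ext_iff]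
      constructor
      · rintro ⟨h1 | h1, h2⟩
        · exact Or.inl ⟨h1, h2⟩
        · exact Or.inr ⟨h1, h2⟩
      · rintro (⟨h1, h2⟩ | ⟨h1, h2⟩)
        · exact ⟨Or.inl h1, h2⟩
        · exact ⟨Or.inr h1, h2⟩
    have hf1 : ((({x, x⁻¹} : Finset (Multiplicative ℤ)) ×ˢ ({b} : Finset (Multiplicative ℤ))).filter
        (fun q => q.1 * q.2 = x * b)) = {(x, b)} := by
      rw [hprodset, Finset.filter_insert, Finset.filter_singleton]
      rw [if_pos rfl, if_neg e1]
      simp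
    have hf2 : ((({x, x⁻¹} : Finset (Multiplicative ℤ)) ×ˢ ({b} : Finset (Multiplicative ℤ))).filter
        (fun q => q.1 * q.2 = (x * b)⁻¹)) = ∅ := by
      rw [hprodset, Finset.filter_insert, Finset.filter_singleton]
      rw [if_neg e2, if_neg e3]
    have hprod := A.mul_mem_span (A.sq_mem_span (A.partOf_mem x)) (A.sq_mem_span (A.partOf_mem b))
    have hmem1 : x * b ∈ A.partOf (x * b) := A.mem_partOf _
    have hmem2 : (x * b)⁻¹ ∈ A.partOf (x * b) := by
      rw [h]
      exact Finset.mem_insert_of_mem (Finset.mem_singleton_self _)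
    have hcoeff := coeff_const_on_parts A hprod (A.partOf_mem (x * b)) hmem1 hmem2
    rw [hpx, hpb, mul_sq_apply, mul_sq_apply, hf1, hf2] at hcoeff
    simp only [Finset.card_singleton, Finset.card_empty, Nat.cast_one, Nat.cast_zero] at hcoeff
    exact one_ne_zero hcoeff

lemma no_mixed (A : SchurRing F (Multiplicative ℤ)) {a b : Multiplicative ℤ}
    (ha1 : a ≠ 1) (hb1 : b ≠ 1)
    (hpa : A.partOf a = {a, a⁻¹}) (hpb : A.partOf b = {b}) : False := by
  classical
  have ha0 := toadd_ne_zero ha1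
  have hb0 := toadd_ne_zero hb1
  have hainv : a⁻¹ ≠ a := by
    apply toadd_ne
    simp only [toAdd_inv]
    omega
  have hba : b ≠ a := by
    rintro rfl
    have h := hpa.symm.trans hpb
    have : b⁻¹ ∈ ({b} : Finset (Multiplicative ℤ)) := by
      rw [← h]
      exact Finset.mem_insert_of_mem (Finset.mem_singleton_self _)
    exact hainv (Finset.mem_singleton.mp this)
  have hba' : b ≠ a⁻¹ := by
    rintro rfl
    have h2 : A.partOf a⁻¹ = {a⁻¹, a} := by
      rw [A.partOf_inv, hpa]
      rw [Finset.image_insert, Finset.image_singleton, inv_inv]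
    have h3 := h2.symm.trans hpb
    have : a ∈ ({a⁻¹} : Finset (Multiplicative ℤ)) := by
      rw [← h3]
      exact Finset.mem_insert_of_mem (Finset.mem_singleton_self _)
    exact hainv.symm (Finset.mem_singleton.mp this)
  have h1 : A.partOf (a * b) = {a * b} := pair_singleton_mul A ha1 hb1 hba' hpa hpb
  have h3 : A.partOf ((a * b)⁻¹) = {(a * b)⁻¹} := by
    rw [A.partOf_inv, h1, Finset.image_singleton]
  -- product of the two singleton parts
  have hprod := A.mul_mem_span (A.sq_mem_span (A.partOf_mem b))
    (A.sq_mem_span (A.partOf_mem ((a * b)⁻¹)))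
  have hmema : a ∈ A.partOf a := A.mem_partOf a
  have hmema' : a⁻¹ ∈ A.partOf a := by
    rw [hpa]
    exact Finset.mem_insert_of_mem (Finset.mem_singleton_self _)
  have hcoeff := coeff_const_on_parts A hprod (A.partOf_mem a) hmema hmema'
  rw [hpb, h3, mul_sq_apply, mul_sq_apply] at hcoeff
  have hone : ((({b} : Finset (Multiplicative ℤ)) ×ˢ ({(a * b)⁻¹} : Finset (Multiplicative ℤ))).filter
      (fun q => q.1 * q.2 = a⁻¹)) = {(b, (a * b)⁻¹)} := by
    rw [Finset.singleton_product_singleton, Finset.filter_singleton, if_pos]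
    apply Multiplicative.toAdd.injective
    simp only [toAdd_mul, toAdd_inv]
    ring
  have hzero : ((({b} : Finset (Multiplicative ℤ)) ×ˢ ({(a * b)⁻¹} : Finset (Multiplicative ℤ))).filter
      (fun q => q.1 * q.2 = a)) = ∅ := by
    rw [Finset.singleton_product_singleton, Finset.filter_singleton, if_neg]
    apply toadd_ne
    simp only [toAdd_mul, toAdd_inv]
    omega
  rw [hone, hzero] at hcoeff
  simp only [Finset.card_singleton, Finset.card_empty, Nat.cast_one, Nat.cast_zero] at hcoeff
  exact one_ne_zero hcoeff.symm

end Dichotomy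
/-- The only Schur rings over the infinite cyclic group are the discrete one and
the symmetric one with basic sets `{z^i, z^{-i}}`. -/
theorem schurRing_int {F : Type*} [Field F] [CharZero F]
    (A : SchurRing F (Multiplicative ℤ)) :
    A.parts = {D : Finset (Multiplicative ℤ) | ∃ g : Multiplicative ℤ, D = {g}} ∨
    A.parts = {D : Finset (Multiplicative ℤ) |
      ∃ i : ℤ, D = {Multiplicative.ofAdd i, Multiplicative.ofAdd (-i)}} := by
  classical
  by_cases hs : ∀ D ∈ A.parts, ∃ g : Multiplicative ℤ, D = {g}
  · left
    ext D
    simp only [Set.mem_setOf_eq]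
    constructor
    · exact hs D
    · rintro ⟨g, rfl⟩
      have hmem := A.partOf_mem g
      obtain ⟨g', hg'⟩ := hs _ hmem
      have hgmem := A.mem_partOf g
      rw [hg', Finset.mem_singleton] at hgmem
      rw [← hgmem] at hg'
      rw [← hg']
      exact hmem
  · right
    push_neg at hs
    obtain ⟨D₀, hD₀, hD₀n⟩ := hs
    obtain ⟨g₀, hg₀⟩ := A.parts_nonempty D₀ hD₀
    have hD₀pair : D₀ = {g₀, g₀⁻¹} := by
      rcases part_eq_pair A hD₀ hg₀ with h | h
      · exact absurd h (hD₀n g₀)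
      · exact h
    have hg₀1 : g₀ ≠ 1 := by
      rintro rfl
      apply hD₀n 1
      rw [hD₀pair, inv_one]
      simp
    have hpg₀ : A.partOf g₀ = {g₀, g₀⁻¹} := by
      rw [← A.part_eq hD₀ hg₀]
      exact hD₀pair
    ext D
    simp only [Set.mem_setOf_eq]
    constructor
    · intro hD
      obtain ⟨g, hg⟩ := A.parts_nonempty D hD
      rcases part_eq_pair A hD hg with h | h
      · by_cases hg1 : g = 1
        · refine ⟨0, ?_⟩
          rw [h, hg1]
          simp
        · exfalso
          have hpg : A.partOf g = {g} := by
            rw [← A.part_eq hD hg]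
            exact h
          exact no_mixed A hg₀1 hg1 hpg₀ hpg
      · refine ⟨g.toAdd, ?_⟩
        rw [h]
        simp
    · rintro ⟨i, rfl⟩
      by_cases hi : i = 0
      · subst hi
        have : ({Multiplicative.ofAdd (0 : ℤ), Multiplicative.ofAdd (-(0 : ℤ))} :
            Finset (Multiplicative ℤ)) = {1} := by
          simp
        rw [this]
        exact A.one_mem
      · set g := Multiplicative.ofAdd i with hgdef
        have hg1 : g ≠ 1 := by
          intro e
          apply hi
          have h2 := congrArg Multiplicative.toAdd e
          simpa [hgdef] using h2
        have hpair : ({Multiplicative.ofAdd i, Multiplicative.ofAdd (-i)} :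
            Finset (Multiplicative ℤ)) = {g, g⁻¹} := by
          rw [hgdef, ofAdd_neg]
        rcases part_eq_pair A (A.partOf_mem g) (A.mem_partOf g) with h | h
        · exact absurd (no_mixed A hg₀1 hg1 hpg₀ h) (fun x => x)
        · rw [hpair, ← h]
          exact A.partOf_mem g
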